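/- For all nonnegative integers p and q, the signed count of (p,q)-shuffles equals Y_{p,q}; that is, the sum over all permutations σ of {1,…,p+q} that preserve the relative order of the first p elements and of the last q elements, of the sign of σ, equals binom(⌊(p+q)/2⌋, ⌊p/2⌋) if p or q is even, and equals 0 if both p and q are odd. -/
import Mathlib


/-- A `(p,q)`-shuffle: a permutation of `Fin (p+q)` preserving the relative
order of the first `p` elements and of the last `q` elements. -/
def IsShuffle (p q : ℕ) (σ : Equiv.Perm (Fin (p + q))) : Prop :=
  ∀ i j : Fin (p + q), i < j → ((j : ℕ) < p ∨ p ≤ (i : ℕ)) → σ i < σ j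

instance (p q : ℕ) : DecidablePred (IsShuffle p q) := fun σ => by
  unfold IsShuffle; infer_instance

/-- The signed count of `(p,q)`-shuffles. -/
def shuffleSum (p q : ℕ) : ℤ :=
  ∑ σ ∈ Finset.univ.filter (IsShuffle p q), (Equiv.Perm.sign σ : ℤ)

/-- `Y p q = binom(⌊(p+q)/2⌋, ⌊p/2⌋)` if `p` or `q` is even, and `0` otherwise. -/
def Y (p q : ℕ) : ℤ :=
  if Even p ∨ Even q then (((p + q) / 2).choose (p / 2) : ℤ) else 0

/-! ### Auxiliary development -/


open Equiv Finset

def IsShuf (n k : ℕ) (σ : Equiv.Perm (Fin n)) : Prop :=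
  ∀ i j : Fin n, i < j → ((j : ℕ) < k ∨ k ≤ (i : ℕ)) → σ i < σ j

def pext {m : ℕ} (τ : Equiv.Perm (Fin m)) : Equiv.Perm (Fin (m + 1)) :=
  Equiv.Perm.decomposeFin.symm (0, τ)

lemma pext_zero {m : ℕ} (τ : Equiv.Perm (Fin m)) : pext τ 0 = 0 :=
  Equiv.Perm.decomposeFin_symm_apply_zero 0 τ

lemma pext_succ {m : ℕ} (τ : Equiv.Perm (Fin m)) (i : Fin m) :
    pext τ i.succ = (τ i).succ := by
  simp [pext, Equiv.Perm.decomposeFin_symm_apply_succ]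

lemma pext_val {m : ℕ} (τ : Equiv.Perm (Fin m)) (i : Fin (m + 1)) (h : 0 < (i : ℕ)) :
    (pext τ i : ℕ) = (τ ⟨(i : ℕ) - 1, by omega⟩ : ℕ) + 1 := by
  have : i = (⟨(i : ℕ) - 1, by omega⟩ : Fin m).succ := by
    ext; simp; omega
  conv_lhs => rw [this, pext_succ]
  simp

-- the case-A iff
lemma isShuf_pext_iff {m k : ℕ} (τ : Equiv.Perm (Fin m)) :
    IsShuf (m + 1) k (pext τ) ↔ IsShuf m (k - 1) τ := by
  constructor
  · intro H i j hij hcond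
    have := H i.succ j.succ (Fin.succ_lt_succ_iff.mpr hij)
      (by simp only [Fin.val_succ]; omega)
    rw [pext_succ, pext_succ] at this
    exact Fin.succ_lt_succ_iff.mp this
  · intro H i j hij hcond
    rcases Fin.eq_zero_or_eq_succ i with rfl | ⟨i', rfl⟩
    · rw [pext_zero]
      rcases Fin.eq_zero_or_eq_succ j with rfl | ⟨j', rfl⟩
      · exact absurd hij (lt_irrefl _)
      · rw [pext_succ]; exact Fin.succ_pos _
    · rcases Fin.eq_zero_or_eq_succ j with rfl | ⟨j', rfl⟩
      · exact absurd hij (by simp [Fin.lt_def])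
      · rw [pext_succ, pext_succ]
        apply Fin.succ_lt_succ_iff.mpr
        apply H i' j' (Fin.succ_lt_succ_iff.mp hij)
        simp only [Fin.val_succ] at hcond
        omega

-- the case-B permutation
def sB {m : ℕ} (k : ℕ) (hkm : k ≤ m) (τ : Equiv.Perm (Fin m)) : Equiv.Perm (Fin (m + 1)) :=
  pext τ * Fin.cycleRange ⟨k, by omega⟩

lemma sB_val_lt {m k : ℕ} (hkm : k ≤ m) (τ : Equiv.Perm (Fin m)) (i : Fin (m + 1))
    (h : (i : ℕ) < k) : (sB k hkm τ i : ℕ) = (τ ⟨(i : ℕ), by omega⟩ : ℕ) + 1 := by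
  have hc : (Fin.cycleRange (⟨k, by omega⟩ : Fin (m + 1))) i
      = (⟨(i : ℕ), by omega⟩ : Fin m).succ := by
    ext
    rw [Fin.coe_cycleRange_of_lt (by simpa [Fin.lt_def] using h)]
    simp
  show (pext τ (Fin.cycleRange _ i) : ℕ) = _
  rw [hc, pext_succ]
  simp
lemma sB_val_eq {m k : ℕ} (hkm : k ≤ m) (τ : Equiv.Perm (Fin m)) (i : Fin (m + 1))
    (h : (i : ℕ) = k) : sB k hkm τ i = 0 := by
  have : i = (⟨k, by omega⟩ : Fin (m + 1)) := by ext; exact h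
  rw [this]
  show pext τ (Fin.cycleRange _ _) = _
  rw [Fin.cycleRange_self, pext_zero]

lemma sB_val_gt {m k : ℕ} (hkm : k ≤ m) (τ : Equiv.Perm (Fin m)) (i : Fin (m + 1))
    (h : k < (i : ℕ)) : (sB k hkm τ i : ℕ) = (τ ⟨(i : ℕ) - 1, by omega⟩ : ℕ) + 1 := by
  have hc : (Fin.cycleRange (⟨k, by omega⟩ : Fin (m + 1))) i = i :=
    Fin.cycleRange_of_gt (by simpa [Fin.lt_def] using h)
  show (pext τ (Fin.cycleRange _ i) : ℕ) = _
  rw [hc, pext_val _ _ (by omega)]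

-- the case-B iff
lemma isShuf_sB_iff {m k : ℕ} (hk : 0 < k) (hkm : k ≤ m) (τ : Equiv.Perm (Fin m)) :
    IsShuf (m + 1) k (sB k hkm τ) ↔ IsShuf m k τ := by
  constructor
  · intro H i j hij hcond
    rw [Fin.lt_def] at hij
    by_cases hi : (i : ℕ) < k
    · by_cases hj : (j : ℕ) < k
      · have := H ⟨i, by omega⟩ ⟨j, by omega⟩ (by rwa [Fin.lt_def]) (Or.inl hj)
        rw [Fin.lt_def, sB_val_lt hkm τ _ hi, sB_val_lt hkm τ _ hj] at this
        rw [Fin.lt_def]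
        simpa using this
      · exfalso; omega
    · -- k ≤ i < j
      have hik : k ≤ (i : ℕ) := by omega
      have := H i.succ j.succ (by rw [Fin.lt_def]; simp; omega)
        (Or.inr (by simp [Fin.val_succ]; omega))
      rw [Fin.lt_def, sB_val_gt hkm τ _ (by simp [Fin.val_succ]; omega),
        sB_val_gt hkm τ _ (by simp [Fin.val_succ]; omega)] at this
      rw [Fin.lt_def]
      simp only [Fin.val_succ, Nat.add_sub_cancel] at this
      simpa using this
  · intro H i j hij hcond
    rw [Fin.lt_def] at hij
    rw [Fin.lt_def]
    rcases lt_trichotomy (i : ℕ) k with hi | hi | hi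
    · rcases lt_trichotomy (j : ℕ) k with hj | hj | hj
      · have := H ⟨i, by omega⟩ ⟨j, by omega⟩ (by rw [Fin.lt_def]; exact hij) (Or.inl hj)
        rw [Fin.lt_def] at this
        rw [sB_val_lt hkm τ _ hi, sB_val_lt hkm τ _ hj]
        simpa using this
      · exfalso; omega
      · exfalso; omega
    · -- i = k, so j > k
      rw [sB_val_eq hkm τ i hi, sB_val_gt hkm τ j (by omega)]
      simp
    · -- k < i < j
      have := H ⟨(i : ℕ) - 1, by omega⟩ ⟨(j : ℕ) - 1, by omega⟩
        (by rw [Fin.lt_def]; simp; omega) (Or.inr (by simp; omega))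
      rw [Fin.lt_def] at this
      rw [sB_val_gt hkm τ _ hi, sB_val_gt hkm τ _ (by omega)]
      simpa using this

instance (n k : ℕ) : DecidablePred (IsShuf n k) := fun σ => by
  unfold IsShuf; infer_instance

def T (n k : ℕ) : ℤ :=
  ∑ σ ∈ Finset.univ.filter (IsShuf n k), (Equiv.Perm.sign σ : ℤ)

lemma sign_pext {m : ℕ} (τ : Equiv.Perm (Fin m)) :
    Equiv.Perm.sign (pext τ) = Equiv.Perm.sign τ := by
  simp [pext, Equiv.Perm.decomposeFin.symm_sign]

lemma sign_sB {m k : ℕ} (hkm : k ≤ m) (τ : Equiv.Perm (Fin m)) :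
    Equiv.Perm.sign (sB k hkm τ) = (-1) ^ k * Equiv.Perm.sign τ := by
  rw [sB, map_mul, sign_pext, Fin.sign_cycleRange, mul_comm]

lemma pext_of_zero {m : ℕ} (σ : Equiv.Perm (Fin (m + 1))) (h : σ 0 = 0) :
    pext ((Equiv.Perm.decomposeFin σ).2) = σ := by
  have h1 : (Equiv.Perm.decomposeFin σ).1 = 0 := by
    have := Equiv.Perm.decomposeFin.symm_apply_apply σ
    have h2 : Equiv.Perm.decomposeFin.symm
        ((Equiv.Perm.decomposeFin σ).1, (Equiv.Perm.decomposeFin σ).2) 0 = σ 0 := by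
      rw [Prod.mk.eta]; exact DFunLike.congr_fun this 0
    rw [Equiv.Perm.decomposeFin_symm_apply_zero, h] at h2
    exact h2
  have : ((0 : Fin (m+1)), (Equiv.Perm.decomposeFin σ).2) = Equiv.Perm.decomposeFin σ := by
    rw [← h1]
  rw [pext, this, Equiv.Perm.decomposeFin.symm_apply_apply]

lemma pext_snd {m : ℕ} (τ : Equiv.Perm (Fin m)) :
    (Equiv.Perm.decomposeFin (pext τ)).2 = τ := by
  rw [pext, Equiv.Perm.decomposeFin.apply_symm_apply]

lemma shuf_zero_cases {m k : ℕ} (hk : 0 < k) (hkm : k ≤ m) (σ : Equiv.Perm (Fin (m + 1)))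
    (H : IsShuf (m + 1) k σ) : σ 0 = 0 ∨ σ ⟨k, by omega⟩ = 0 := by
  set i₀ := σ.symm 0 with hi₀
  have hs : σ i₀ = 0 := Equiv.apply_symm_apply σ 0
  rcases lt_trichotomy ((i₀ : ℕ)) k with h | h | h
  · rcases Nat.eq_zero_or_pos (i₀ : ℕ) with h0 | h0
    · left
      have : i₀ = 0 := Fin.ext h0
      exact this ▸ hs
    · exfalso
      have := H 0 i₀ (by rw [Fin.lt_def]; simpa using h0) (Or.inl h)
      rw [hs] at this
      exact Fin.not_lt_zero _ this
  · right
    have : i₀ = ⟨k, by omega⟩ := Fin.ext h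
    exact this ▸ hs
  · exfalso
    have := H ⟨k, by omega⟩ i₀ (by rw [Fin.lt_def]; simpa using h) (Or.inr (le_refl k))
    rw [hs] at this
    exact Fin.not_lt_zero _ this

lemma T_rec {m k : ℕ} (hk : 0 < k) (hkm : k ≤ m) :
    T (m + 1) k = T m (k - 1) + (-1) ^ k * T m k := by
  classical
  rw [T, ← Finset.sum_filter_add_sum_filter_not (Finset.univ.filter (IsShuf (m+1) k))
    (fun σ => σ 0 = 0)]
  congr 1
  · -- case A
    rw [T]
    refine Finset.sum_nbij' (fun σ => (Equiv.Perm.decomposeFin σ).2) (fun τ => pext τ)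
      ?_ ?_ ?_ ?_ ?_
    · intro σ hσ
      simp only [Finset.mem_filter, Finset.mem_univ, true_and] at hσ ⊢
      obtain ⟨h1, h2⟩ := hσ
      rw [← isShuf_pext_iff, pext_of_zero σ h2]
      exact h1
    · intro τ hτ
      simp only [Finset.mem_filter, Finset.mem_univ, true_and] at hτ ⊢
      exact ⟨(isShuf_pext_iff τ).mpr hτ, pext_zero τ⟩
    · intro σ hσ
      simp only [Finset.mem_filter, Finset.mem_univ, true_and] at hσ
      exact pext_of_zero σ hσ.2
    · intro τ _
      exact pext_snd τ
    · intro σ hσ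
      simp only [Finset.mem_filter, Finset.mem_univ, true_and] at hσ
      conv_lhs => rw [← pext_of_zero σ hσ.2, sign_pext]
  · -- case B
    rw [T, Finset.mul_sum]
    refine Finset.sum_nbij'
      (fun σ => (Equiv.Perm.decomposeFin (σ * (Fin.cycleRange ⟨k, by omega⟩)⁻¹)).2)
      (fun τ => sB k hkm τ) ?_ ?_ ?_ ?_ ?_
    · intro σ hσ
      simp only [Finset.mem_filter, Finset.mem_univ, true_and] at hσ ⊢
      obtain ⟨h1, h2⟩ := hσ
      have hk0 : σ ⟨k, by omega⟩ = 0 := by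
        rcases shuf_zero_cases hk hkm σ h1 with h | h
        · exact absurd h h2
        · exact h
      have hρ : (σ * (Fin.cycleRange (⟨k, by omega⟩ : Fin (m+1)))⁻¹) 0 = 0 := by
        simp only [Equiv.Perm.mul_apply]
        rw [show ((Fin.cycleRange (⟨k, by omega⟩ : Fin (m+1)))⁻¹ (0 : Fin (m+1)))
          = (Fin.cycleRange (⟨k, by omega⟩ : Fin (m+1))).symm 0 from rfl,
          Fin.cycleRange_symm_zero]
        exact hk0
      have hsb : sB k hkm ((Equiv.Perm.decomposeFin
          (σ * (Fin.cycleRange ⟨k, by omega⟩)⁻¹)).2) = σ := by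
        rw [sB, pext_of_zero _ hρ, inv_mul_cancel_right]
      rw [← isShuf_sB_iff hk hkm, hsb]
      exact h1
    · intro τ hτ
      simp only [Finset.mem_filter, Finset.mem_univ, true_and] at hτ ⊢
      refine ⟨(isShuf_sB_iff hk hkm τ).mpr hτ, ?_⟩
      intro h
      have := sB_val_lt hkm τ 0 (by simpa using hk)
      rw [h] at this
      simp at this
    · intro σ hσ
      simp only [Finset.mem_filter, Finset.mem_univ, true_and] at hσ
      obtain ⟨h1, h2⟩ := hσ
      have hk0 : σ ⟨k, by omega⟩ = 0 := by
        rcases shuf_zero_cases hk hkm σ h1 with h | h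
        · exact absurd h h2
        · exact h
      have hρ : (σ * (Fin.cycleRange (⟨k, by omega⟩ : Fin (m+1)))⁻¹) 0 = 0 := by
        simp only [Equiv.Perm.mul_apply]
        rw [show ((Fin.cycleRange (⟨k, by omega⟩ : Fin (m+1)))⁻¹ (0 : Fin (m+1)))
          = (Fin.cycleRange (⟨k, by omega⟩ : Fin (m+1))).symm 0 from rfl,
          Fin.cycleRange_symm_zero]
        exact hk0
      have hsb : sB k hkm ((Equiv.Perm.decomposeFin
          (σ * (Fin.cycleRange ⟨k, by omega⟩)⁻¹)).2) = σ := by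
        rw [sB, pext_of_zero _ hρ, inv_mul_cancel_right]
      exact hsb
    · intro τ _
      show (Equiv.Perm.decomposeFin (sB k hkm τ * (Fin.cycleRange ⟨k, by omega⟩)⁻¹)).2 = τ
      rw [sB, mul_inv_cancel_right, pext_snd]
    · intro σ hσ
      simp only [Finset.mem_filter, Finset.mem_univ, true_and] at hσ
      obtain ⟨h1, h2⟩ := hσ
      have hk0 : σ ⟨k, by omega⟩ = 0 := by
        rcases shuf_zero_cases hk hkm σ h1 with h | h
        · exact absurd h h2
        · exact h
      have hρ : (σ * (Fin.cycleRange (⟨k, by omega⟩ : Fin (m+1)))⁻¹) 0 = 0 := by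
        simp only [Equiv.Perm.mul_apply]
        rw [show ((Fin.cycleRange (⟨k, by omega⟩ : Fin (m+1)))⁻¹ (0 : Fin (m+1)))
          = (Fin.cycleRange (⟨k, by omega⟩ : Fin (m+1))).symm 0 from rfl,
          Fin.cycleRange_symm_zero]
        exact hk0
      have hsb : sB k hkm ((Equiv.Perm.decomposeFin
          (σ * (Fin.cycleRange ⟨k, by omega⟩)⁻¹)).2) = σ := by
        rw [sB, pext_of_zero _ hρ, inv_mul_cancel_right]
      conv_lhs => rw [← hsb]
      rw [sign_sB hkm]
      push_cast
      ring



lemma Y_rec (p q : ℕ) :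
    Y (p + 1) (q + 1) = Y p (q + 1) + (-1) ^ (p + 1) * Y (p + 1) q := by
  rcases Nat.even_or_odd p with hp | hp <;> rcases Nat.even_or_odd q with hq | hq
  · obtain ⟨a, rfl⟩ := hp; obtain ⟨b, rfl⟩ := hq
    rw [Y, if_neg (by rw [Nat.even_iff, Nat.even_iff]; omega),
      Y, if_pos (Or.inl ⟨a, rfl⟩), Y, if_pos (Or.inr ⟨b, rfl⟩)]
    rw [show (a + a + (b + b + 1)) / 2 = a + b by omega,
      show (a + a) / 2 = a by omega,
      show (a + a + 1 + (b + b)) / 2 = a + b by omega,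
      show (a + a + 1) / 2 = a by omega,
      Odd.neg_one_pow (by rw [Nat.odd_iff]; omega)]
    ring
  · obtain ⟨a, rfl⟩ := hp; obtain ⟨b, rfl⟩ := hq
    rw [Y, if_pos (Or.inr (by rw [Nat.even_iff]; omega)),
      Y, if_pos (Or.inl ⟨a, rfl⟩),
      Y, if_neg (by rw [Nat.even_iff, Nat.even_iff]; omega)]
    rw [show (a + a + (2 * b + 1 + 1)) / 2 = a + b + 1 by omega,
      show (a + a) / 2 = a by omega,
      show (a + a + 1 + (2 * b + 1 + 1)) / 2 = a + b + 1 by omega,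
      show (a + a + 1) / 2 = a by omega]
    ring
  · obtain ⟨a, rfl⟩ := hp; obtain ⟨b, rfl⟩ := hq
    rw [Y, if_pos (Or.inl (by rw [Nat.even_iff]; omega)),
      Y, if_neg (by rw [Nat.even_iff, Nat.even_iff]; omega),
      Y, if_pos (Or.inr ⟨b, rfl⟩)]
    rw [show (2 * a + 1 + 1 + (b + b + 1)) / 2 = a + b + 1 by omega,
      show (2 * a + 1 + 1 + (b + b)) / 2 = a + b + 1 by omega,
      show (2 * a + 1 + 1) / 2 = a + 1 by omega,
      Even.neg_one_pow (by rw [Nat.even_iff]; omega)]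
    ring
  · obtain ⟨a, rfl⟩ := hp; obtain ⟨b, rfl⟩ := hq
    rw [Y, if_pos (Or.inl (by rw [Nat.even_iff]; omega)),
      Y, if_pos (Or.inr (by rw [Nat.even_iff]; omega)),
      Y, if_pos (Or.inl (by rw [Nat.even_iff]; omega))]
    rw [show (2 * a + 1 + 1 + (2 * b + 1 + 1)) / 2 = (a + b + 1) + 1 by omega,
      show (2 * a + 1 + 1) / 2 = a + 1 by omega,
      show (2 * a + 1 + (2 * b + 1 + 1)) / 2 = a + b + 1 by omega,
      show (2 * a + 1 + 1 + (2 * b + 1)) / 2 = a + b + 1 by omega,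
      show (2 * a + 1) / 2 = a by omega,
      Even.neg_one_pow (by rw [Nat.even_iff]; omega),
      Nat.choose_succ_succ (a + b + 1) a]
    push_cast
    ring

lemma perm_strictMono_eq_one {m : ℕ} (σ : Equiv.Perm (Fin m)) (h : StrictMono σ) : σ = 1 := by
  let e : Fin m ≃o Fin m := ⟨σ, fun {a b} => h.le_iff_le⟩
  have he : e = OrderIso.refl (Fin m) := Subsingleton.elim _ _
  ext i
  have := congrArg (fun f => (f : Fin m ≃o Fin m) i) he
  simp only [e, OrderIso.refl_apply] at this
  exact congrArg Fin.val this

lemma isShuf_one (n k : ℕ) : IsShuf n k 1 := fun i j hij _ => hij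

lemma T_base {n k : ℕ} (h : k = 0 ∨ n ≤ k) : T n k = 1 := by
  have hf : Finset.univ.filter (IsShuf n k) = {1} := by
    ext σ
    simp only [Finset.mem_filter, Finset.mem_univ, true_and, Finset.mem_singleton]
    constructor
    · intro hs
      apply perm_strictMono_eq_one
      intro i j hij
      refine hs i j hij ?_
      rcases h with h | h
      · right; omega
      · left; exact lt_of_lt_of_le j.isLt h
    · rintro rfl; exact isShuf_one n k
  simp [T, hf]

lemma T_eq : ∀ N p q : ℕ, p + q = N → T N p = Y p q := by
  intro N
  induction N with
  | zero =>
    intro p q h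
    have hp : p = 0 := by omega
    have hq : q = 0 := by omega
    subst hp; subst hq
    rw [T_base (Or.inl rfl), Y, if_pos (Or.inl Even.zero)]
    simp
  | succ n ih =>
    intro p q h
    rcases p with _ | p
    · rw [T_base (Or.inl rfl), Y, if_pos (Or.inl Even.zero)]
      simp
    · rcases q with _ | q
      · rw [T_base (Or.inr (by omega)), Y, if_pos (Or.inr Even.zero)]
        rw [show (p + 1 + 0) / 2 = (p + 1) / 2 by omega, Nat.choose_self]
        simp
      · rw [T_rec (by omega) (by omega), Nat.add_sub_cancel,
          ih p (q + 1) (by omega), ih (p + 1) q (by omega), ← Y_rec]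

lemma shuffleSum_eq_T (p q : ℕ) : shuffleSum p q = T (p + q) p := by
  unfold shuffleSum T
  congr 1

theorem signed_count_shuffles (p q : ℕ) : shuffleSum p q = Y p q := by
  rw [shuffleSum_eq_T]
  exact T_eq (p + q) p q rfl
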